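/- arXiv:2312.15473 — 2 statements merged into one kernel-verified Lean document; each statement's English description precedes it below -/
import Mathlib

section
/- The 7-dimensional step-2 stratified Lie algebra 𝔤_{7,5,2} of rank 5, with only nontrivial brackets [X₁,X₂]=[X₃,X₄]=T₁ and [X₁,X₅]=[X₂,X₃]=T₂, is plentiful: every 4-dimensional subspace V of V₁ = span{X₁,…,X₅} satisfies [V,V] = V₂ = span{T₁,T₂}. -/
/-- The bracket of the stratified Lie algebra `𝔤_{7,5,2}`, expressed in the
orthonormal basis `X₁,…,X₅` of `V₁` and `T₁,T₂` of `V₂`: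
`[X₁,X₂] = [X₃,X₄] = T₁` and `[X₁,X₅] = [X₂,X₃] = T₂`. -/
noncomputable def br752 (x y : Fin 5 → ℝ) : Fin 2 → ℝ :=
  ![x 0 * y 1 - x 1 * y 0 + x 2 * y 3 - x 3 * y 2,
    x 0 * y 4 - x 4 * y 0 + x 1 * y 2 - x 2 * y 1]

open Module Submodule LinearMap

/-- The bilinear map `y ↦ (x ↦ a·ω₁(x,y) + b·ω₂(x,y))`. -/
noncomputable def phi752 (a b : ℝ) :
    (Fin 5 → ℝ) →ₗ[ℝ] Module.Dual ℝ (Fin 5 → ℝ) :=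
  LinearMap.mk₂ ℝ (fun y x =>
      a * (x 0 * y 1 - x 1 * y 0 + x 2 * y 3 - x 3 * y 2)
        + b * (x 0 * y 4 - x 4 * y 0 + x 1 * y 2 - x 2 * y 1))
    (by intro m₁ m₂ n; simp [Pi.add_apply]; ring)
    (by intro c m n; simp [Pi.smul_apply, smul_eq_mul]; ring)
    (by intro m n₁ n₂; simp [Pi.add_apply]; ring)
    (by intro c m n; simp [Pi.smul_apply, smul_eq_mul]; ring)

lemma vec5_eq {u v : Fin 5 → ℝ} (h0 : u 0 = v 0) (h1 : u 1 = v 1)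
    (h2 : u 2 = v 2) (h3 : u 3 = v 3) (h4 : u 4 = v 4) : u = v := by
  funext i
  fin_cases i
  exacts [h0, h1, h2, h3, h4]

lemma ker752 {a b : ℝ} (hab : ¬ (a = 0 ∧ b = 0)) :
    LinearMap.ker (phi752 a b) ≤
      Submodule.span ℝ {![0, a * b, 0, b ^ 2, -a ^ 2]} := by
  intro y hy
  rw [LinearMap.mem_ker] at hy
  have key : ∀ x : Fin 5 → ℝ,
      a * (x 0 * y 1 - x 1 * y 0 + x 2 * y 3 - x 3 * y 2)
        + b * (x 0 * y 4 - x 4 * y 0 + x 1 * y 2 - x 2 * y 1) = 0 := by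
    intro x
    have := DFunLike.congr_fun hy x
    simpa [phi752] using this
  have h0 : a * y 1 + b * y 4 = 0 := by
    have hk := key ![1, 0, 0, 0, 0]
    simp only [Matrix.cons_val_zero, Matrix.cons_val_one, Matrix.head_cons,
      Matrix.cons_val_two, Matrix.tail_cons, Matrix.cons_val_three,
      Matrix.cons_val_four] at hk
    linear_combination hk
  have h1 : -(a * y 0) + b * y 2 = 0 := by
    have hk := key ![0, 1, 0, 0, 0]
    simp only [Matrix.cons_val_zero, Matrix.cons_val_one, Matrix.head_cons,
      Matrix.cons_val_two, Matrix.tail_cons, Matrix.cons_val_three,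
      Matrix.cons_val_four] at hk
    linear_combination hk
  have h2 : a * y 3 - b * y 1 = 0 := by
    have hk := key ![0, 0, 1, 0, 0]
    simp only [Matrix.cons_val_zero, Matrix.cons_val_one, Matrix.head_cons,
      Matrix.cons_val_two, Matrix.tail_cons, Matrix.cons_val_three,
      Matrix.cons_val_four] at hk
    linear_combination hk
  have h3 : a * y 2 = 0 := by
    have hk := key ![0, 0, 0, 1, 0]
    simp only [Matrix.cons_val_zero, Matrix.cons_val_one, Matrix.head_cons,
      Matrix.cons_val_two, Matrix.tail_cons, Matrix.cons_val_three,
      Matrix.cons_val_four] at hk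
    linear_combination -hk
  have h4 : b * y 0 = 0 := by
    have hk := key ![0, 0, 0, 0, 1]
    simp only [Matrix.cons_val_zero, Matrix.cons_val_one, Matrix.head_cons,
      Matrix.cons_val_two, Matrix.tail_cons, Matrix.cons_val_three,
      Matrix.cons_val_four] at hk
    linear_combination -hk
  rw [Submodule.mem_span_singleton]
  by_cases hb : b = 0
  · have ha : a ≠ 0 := fun h => hab ⟨h, hb⟩
    have ey0 : y 0 = 0 := by
      have h : a * y 0 = 0 := by rw [hb] at h1; linarith
      exact (mul_eq_zero.mp h).resolve_left ha
    have ey1 : y 1 = 0 := by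
      have h : a * y 1 = 0 := by rw [hb] at h0; linarith
      exact (mul_eq_zero.mp h).resolve_left ha
    have ey2 : y 2 = 0 := (mul_eq_zero.mp h3).resolve_left ha
    have ey3 : y 3 = 0 := by
      have h : a * y 3 = 0 := by rw [hb] at h2; linarith
      exact (mul_eq_zero.mp h).resolve_left ha
    refine ⟨-(y 4) / a ^ 2, vec5_eq ?_ ?_ ?_ ?_ ?_⟩
    · simp only [Pi.smul_apply, smul_eq_mul, Matrix.cons_val_zero]
      rw [ey0]; ring
    · simp only [Pi.smul_apply, smul_eq_mul, Matrix.cons_val_one, Matrix.head_cons,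
        Matrix.cons_val_zero]
      rw [ey1, hb]; ring
    · simp only [Pi.smul_apply, smul_eq_mul, Matrix.cons_val_two, Matrix.tail_cons,
        Matrix.head_cons]
      rw [ey2]; ring
    · simp only [Pi.smul_apply, smul_eq_mul, Matrix.cons_val_three, Matrix.tail_cons,
        Matrix.head_cons]
      rw [ey3, hb]; ring
    · simp only [Pi.smul_apply, smul_eq_mul, Matrix.cons_val_four, Matrix.tail_cons,
        Matrix.head_cons]
      field_simp
  · have ey0 : y 0 = 0 := (mul_eq_zero.mp h4).resolve_left hb
    have ey2 : y 2 = 0 := by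
      have h : b * y 2 = 0 := by rw [ey0] at h1; linarith
      exact (mul_eq_zero.mp h).resolve_left hb
    refine ⟨y 3 / b ^ 2, vec5_eq ?_ ?_ ?_ ?_ ?_⟩
    · simp only [Pi.smul_apply, smul_eq_mul, Matrix.cons_val_zero]
      rw [ey0]; ring
    · simp only [Pi.smul_apply, smul_eq_mul, Matrix.cons_val_one, Matrix.head_cons,
        Matrix.cons_val_zero]
      field_simp
      linear_combination h2
    · simp only [Pi.smul_apply, smul_eq_mul, Matrix.cons_val_two, Matrix.tail_cons,
        Matrix.head_cons]
      rw [ey2]; ring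
    · simp only [Pi.smul_apply, smul_eq_mul, Matrix.cons_val_three, Matrix.tail_cons,
        Matrix.head_cons]
      field_simp
    · simp only [Pi.smul_apply, smul_eq_mul, Matrix.cons_val_four, Matrix.tail_cons,
        Matrix.head_cons]
      field_simp
      linear_combination (-a) * h2 - b * h0

/-- The Lie algebra `𝔤_{7,5,2}` is plentiful: every 4-dimensional subspace `V`
of `V₁ = ℝ⁵` satisfies `[V,V] = V₂ = ℝ²`. -/
theorem stmt_8 (V : Submodule ℝ (Fin 5 → ℝ)) (hV : Module.finrank ℝ V = 4) :
    Submodule.span ℝ {z | ∃ x ∈ V, ∃ y ∈ V, br752 x y = z}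
      = (⊤ : Submodule ℝ (Fin 2 → ℝ)) := by
  by_contra hne
  set S := Submodule.span ℝ {z | ∃ x ∈ V, ∃ y ∈ V, br752 x y = z} with hS
  -- extract a nonzero functional (a, b) vanishing on all brackets
  have hSfin : Module.finrank ℝ S ≤ 1 := by
    have hlt : S < ⊤ := lt_top_iff_ne_top.mpr hne
    have := Submodule.finrank_lt (K := ℝ) (V := Fin 2 → ℝ) hlt.ne
    have h2 : Module.finrank ℝ (Fin 2 → ℝ) = 2 := by simp
    omega
  obtain ⟨w, hw⟩ := finrank_le_one_iff.mp hSfin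
  have hbr : ∀ x ∈ V, ∀ y ∈ V,
      ∃ c : ℝ, c • (w : Fin 2 → ℝ) = br752 x y := by
    intro x hx y hy
    have hmem : br752 x y ∈ S := Submodule.subset_span ⟨x, hx, y, hy, rfl⟩
    obtain ⟨c, hc⟩ := hw ⟨_, hmem⟩
    exact ⟨c, by simpa using congrArg (Subtype.val) hc⟩
  obtain ⟨a, b, hab, hann⟩ :
      ∃ a b : ℝ, ¬ (a = 0 ∧ b = 0) ∧
        ∀ x ∈ V, ∀ y ∈ V, a * br752 x y 0 + b * br752 x y 1 = 0 := by
    by_cases hw0 : (w : Fin 2 → ℝ) = 0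
    · refine ⟨1, 0, by simp, ?_⟩
      intro x hx y hy
      obtain ⟨c, hc⟩ := hbr x hx y hy
      rw [hw0] at hc
      simp [← hc]
    · refine ⟨(w : Fin 2 → ℝ) 1, -((w : Fin 2 → ℝ) 0), ?_, ?_⟩
      · rintro ⟨h1, h0⟩
        apply hw0
        funext i
        fin_cases i
        · exact neg_eq_zero.mp h0
        · exact h1
      · intro x hx y hy
        obtain ⟨c, hc⟩ := hbr x hx y hy
        have e0 : br752 x y 0 = c * (w : Fin 2 → ℝ) 0 := by
          rw [← hc]; simp
        have e1 : br752 x y 1 = c * (w : Fin 2 → ℝ) 1 := by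
          rw [← hc]; simp
        rw [e0, e1]; ring
  -- the restricted bilinear map
  set Ψ := (phi752 a b).domRestrict V with hΨ
  have hrange : LinearMap.range Ψ ≤ V.dualAnnihilator := by
    rintro _ ⟨y, rfl⟩
    rw [Submodule.mem_dualAnnihilator]
    intro x hx
    have := hann x hx y y.2
    simp only [br752, Matrix.cons_val_zero, Matrix.cons_val_one, Matrix.head_cons] at this
    simp only [hΨ, LinearMap.domRestrict_apply, phi752, LinearMap.mk₂_apply]
    linarith
  have hrk : Module.finrank ℝ (LinearMap.range Ψ) ≤ 1 := by
    have h1 : Module.finrank ℝ (V.dualAnnihilator) = 1 := by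
      have hq : Module.finrank ℝ ((Fin 5 → ℝ) ⧸ V) = Module.finrank ℝ V.dualAnnihilator :=
        (Subspace.quotEquivAnnihilator V).finrank_eq
      have := Submodule.finrank_quotient_add_finrank V
      have h5 : Module.finrank ℝ (Fin 5 → ℝ) = 5 := by simp
      omega
    calc Module.finrank ℝ (LinearMap.range Ψ)
        ≤ Module.finrank ℝ (V.dualAnnihilator) := Submodule.finrank_mono hrange
      _ = 1 := h1
  have hker : Module.finrank ℝ (LinearMap.ker Ψ) ≤ 1 := by
    have hkereq : LinearMap.ker Ψ = (LinearMap.ker (phi752 a b)).comap V.subtype :=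
      LinearMap.ker_domRestrict V (phi752 a b)
    have hle : (LinearMap.ker Ψ).map V.subtype ≤
        Submodule.span ℝ {![0, a * b, 0, b ^ 2, -a ^ 2]} := by
      rw [hkereq]
      exact le_trans (Submodule.map_comap_le _ _) (ker752 hab)
    have heq : Module.finrank ℝ ((LinearMap.ker Ψ).map V.subtype)
        = Module.finrank ℝ (LinearMap.ker Ψ) :=
      Submodule.finrank_map_subtype_eq V _
    rw [← heq]
    exact le_trans (Submodule.finrank_mono hle) (le_trans (finrank_span_le_card _) (by simp))
  have hrn := LinearMap.finrank_range_add_finrank_ker Ψ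
  rw [hV] at hrn
  omega
end

section
/- For every α > 0, p ∈ 𝔾 and s₀ ∈ ℝ, the union over s < s₀ of the positive cones C⁺(p⋆se₁, α) is all of 𝔾. -/
open Matrix

/-- `⟨Bx,ξ⟩ ∈ ℝ^{m₂}`. -/
noncomputable def bvec {m₁ m₂ : ℕ} (B : Fin m₂ → Matrix (Fin m₁) (Fin m₁) ℝ)
    (x ξ : Fin m₁ → ℝ) : Fin m₂ → ℝ :=
  fun j => (B j).mulVec x ⬝ᵥ ξ

/-- The step-2 group law `(x,t) ⋆ (ξ,τ) = (x + ξ, t + τ + ½⟨Bx,ξ⟩)`. -/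
noncomputable def gmul {m₁ m₂ : ℕ} (B : Fin m₂ → Matrix (Fin m₁) (Fin m₁) ℝ)
    (p q : (Fin m₁ → ℝ) × (Fin m₂ → ℝ)) : (Fin m₁ → ℝ) × (Fin m₂ → ℝ) :=
  (p.1 + q.1, p.2 + q.2 + (1 / 2 : ℝ) • bvec B p.1 q.1)

/-- Euclidean norm on `ℝ^n`. -/
noncomputable def eunorm {n : ℕ} (x : Fin n → ℝ) : ℝ :=
  Real.sqrt (∑ i, x i ^ 2)

/-- Component of `x` along the horizontal direction `e₁`: `x^∥ = x₁e₁`. -/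
noncomputable def xpar {m : ℕ} (x : Fin (m + 1) → ℝ) : Fin (m + 1) → ℝ :=
  Pi.single 0 (x 0)

/-- Orthogonal component `x^⊥ = x - x^∥`. -/
noncomputable def xperp {m : ℕ} (x : Fin (m + 1) → ℝ) : Fin (m + 1) → ℝ :=
  x - xpar x

/-- The positive open cone `C⁺(0,α)` with vertex `0` and aperture `α`:
`max{|x^⊥|, ε₂|t − ½⟨Bx^⊥, x^∥⟩|^{1/2}} < α|x₁|` with `x₁ > 0`. -/
noncomputable def posCone {m m₂ : ℕ}
    (B : Fin m₂ → Matrix (Fin (m + 1)) (Fin (m + 1)) ℝ) (ε₂ α : ℝ) :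
    Set ((Fin (m + 1) → ℝ) × (Fin m₂ → ℝ)) :=
  {p | max (eunorm (xperp p.1))
        (ε₂ * Real.sqrt (eunorm (p.2 - (1 / 2 : ℝ) • bvec B (xperp p.1) (xpar p.1))))
      < α * |p.1 0| ∧ 0 < p.1 0}

section Aux

lemma eunorm_eq' {n : ℕ} (x : Fin n → ℝ) :
    eunorm x = ‖(WithLp.equiv 2 (Fin n → ℝ)).symm x‖ := by
  rw [EuclideanSpace.norm_eq]
  simp [eunorm, sq_abs]

lemma eunorm_nonneg' {n : ℕ} (x : Fin n → ℝ) : 0 ≤ eunorm x := Real.sqrt_nonneg _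

lemma eunorm_add_le' {n : ℕ} (x y : Fin n → ℝ) : eunorm (x + y) ≤ eunorm x + eunorm y := by
  simp only [eunorm_eq']
  exact norm_add_le _ _

lemma eunorm_smul' {n : ℕ} (s : ℝ) (x : Fin n → ℝ) : eunorm (s • x) = |s| * eunorm x := by
  simp only [eunorm_eq']
  rw [show (WithLp.equiv 2 (Fin n → ℝ)).symm (s • x)
      = s • (WithLp.equiv 2 (Fin n → ℝ)).symm x from rfl]
  rw [norm_smul, Real.norm_eq_abs]

variable {m₁ m₂ : ℕ} (B : Fin m₂ → Matrix (Fin m₁) (Fin m₁) ℝ)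

lemma bvec_add_left (x y ξ : Fin m₁ → ℝ) : bvec B (x + y) ξ = bvec B x ξ + bvec B y ξ := by
  funext j; simp [bvec, Matrix.mulVec_add, add_dotProduct]

lemma bvec_sub_right (x ξ η : Fin m₁ → ℝ) : bvec B x (ξ - η) = bvec B x ξ - bvec B x η := by
  funext j; simp [bvec, dotProduct_sub]

lemma bvec_smul_left (s : ℝ) (x ξ : Fin m₁ → ℝ) : bvec B (s • x) ξ = s • bvec B x ξ := by
  funext j; simp [bvec, Matrix.mulVec_smul, smul_dotProduct]

lemma bvec_smul_right (s : ℝ) (x ξ : Fin m₁ → ℝ) : bvec B x (s • ξ) = s • bvec B x ξ := by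
  funext j; simp [bvec, dotProduct_smul]

lemma bvec_self (hB : ∀ j, (B j)ᵀ = -B j) (x : Fin m₁ → ℝ) : bvec B x x = 0 := by
  funext j
  have h : (B j).mulVec x ⬝ᵥ x = x ⬝ᵥ (B j).mulVec x := dotProduct_comm _ _
  have h2 : x ⬝ᵥ (B j).mulVec x = ((B j)ᵀ).mulVec x ⬝ᵥ x := by
    rw [dotProduct_mulVec, mulVec_transpose]
  have h3 : ((B j)ᵀ).mulVec x ⬝ᵥ x = -((B j).mulVec x ⬝ᵥ x) := by
    rw [hB j]; simp [Matrix.neg_mulVec, neg_dotProduct]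
  have := h.trans (h2.trans h3)
  simp only [bvec, Pi.zero_apply]
  linarith

lemma key_identity (hB : ∀ j, (B j)ᵀ = -B j) (e p1 u xp : Fin m₁ → ℝ)
    (q2 p2 : Fin m₂ → ℝ) (s c : ℝ) :
    q2 - (p2 + (1/2:ℝ) • bvec B p1 (s • e)) - (1/2:ℝ) • bvec B (p1 + s • e) (u - s • e)
      - (1/2:ℝ) • bvec B xp ((c - s) • e)
    = (q2 - p2 - (1/2:ℝ) • bvec B p1 u - (c/2) • bvec B xp e)
      + s • ((1/2:ℝ) • (bvec B xp e - bvec B e u)) := by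
  simp only [bvec_add_left, bvec_sub_right, bvec_smul_left, bvec_smul_right,
    bvec_self B hB, smul_zero]
  module

lemma single_eq_smul' {m : ℕ} (s : ℝ) :
    (Pi.single (0 : Fin (m+1)) s : Fin (m+1) → ℝ)
      = s • (Pi.single (0 : Fin (m+1)) (1:ℝ) : Fin (m+1) → ℝ) := by
  funext i
  simp [Pi.single_apply]

lemma xperp_sub_single' {m : ℕ} (x : Fin (m+1) → ℝ) (s : ℝ) :
    xperp (x - s • (Pi.single (0 : Fin (m+1)) (1:ℝ) : Fin (m+1) → ℝ)) = xperp x := by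
  funext i
  rcases eq_or_ne i 0 with h | h
  · subst h; simp [xperp, xpar, Pi.single_apply]
  · simp [xperp, xpar, Pi.single_apply, h]

lemma xpar_eq' {m : ℕ} (x : Fin (m+1) → ℝ) :
    xpar x = x 0 • (Pi.single (0 : Fin (m+1)) (1:ℝ) : Fin (m+1) → ℝ) := by
  rw [xpar, single_eq_smul']

end Aux

/-- For every `α > 0`, `p ∈ 𝔾` and `s₀ ∈ ℝ`, the union over `s < s₀` of the
positive cones `C⁺(p ⋆ se₁, α)` is all of `𝔾`. -/
theorem stmt_13 (m m₂ : ℕ) (B : Fin m₂ → Matrix (Fin (m + 1)) (Fin (m + 1)) ℝ)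
    (hB : ∀ j, (B j)ᵀ = -B j) (ε₂ : ℝ) (hε₂ : 0 < ε₂)
    (α : ℝ) (hα : 0 < α) (p : (Fin (m + 1) → ℝ) × (Fin m₂ → ℝ)) (s₀ : ℝ) :
    (⋃ s ∈ Set.Iio s₀,
        (fun c => gmul B (gmul B p (Pi.single (0 : Fin (m + 1)) s, 0)) c) ''
          posCone B ε₂ α)
      = Set.univ := by
  rw [Set.eq_univ_iff_forall]
  intro q
  simp only [Set.mem_iUnion, Set.mem_image, Set.mem_Iio]
  set e : Fin (m+1) → ℝ := Pi.single 0 1 with he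
  set u : Fin (m+1) → ℝ := q.1 - p.1 with hu
  set v : Fin m₂ → ℝ :=
    q.2 - p.2 - (1/2:ℝ) • bvec B p.1 u - ((u 0)/2) • bvec B (xperp u) e with hv
  set w : Fin m₂ → ℝ := (1/2:ℝ) • (bvec B (xperp u) e - bvec B e u) with hw
  set A := eunorm (xperp u) with hA
  set V := eunorm v with hV
  set W := eunorm w with hW
  set X := u 0 with hX
  set K := ε₂^2 * (V + |X| * W + W) with hK
  set T := max 1 (max (A/α) (max (X - s₀) (K/α^2))) + 1 with hT
  set s := X - T with hs
  have hT1 : 1 < T := lt_of_le_of_lt (le_max_left _ _) (lt_add_one _)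
  have hT0 : 0 < T := by linarith
  have h1 : A/α < T :=
    lt_of_le_of_lt ((le_max_left _ _).trans (le_max_right _ _)) (lt_add_one _)
  have h2 : X - s₀ < T :=
    lt_of_le_of_lt (((le_max_left _ _).trans (le_max_right _ _)).trans (le_max_right _ _))
      (lt_add_one _)
  have h3 : K/α^2 < T :=
    lt_of_le_of_lt (((le_max_right _ _).trans (le_max_right _ _)).trans (le_max_right _ _))
      (lt_add_one _)
  set P := gmul B p (Pi.single (0 : Fin (m+1)) s, 0) with hP
  set c : (Fin (m+1) → ℝ) × (Fin m₂ → ℝ) :=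
    (q.1 - P.1, q.2 - P.2 - (1/2:ℝ) • bvec B P.1 (q.1 - P.1)) with hc
  have hP1 : P.1 = p.1 + s • e := by
    rw [hP, gmul, ← single_eq_smul']
  have hc1 : c.1 = u - s • e := by
    rw [hc, hP1, hu]; abel
  have hc10 : c.1 0 = u 0 - s := by
    rw [hc1]
    simp [he, Pi.single_eq_same]
  have hc10T : c.1 0 = T := by rw [hc10, hs, hX]; ring
  have hperp : xperp c.1 = xperp u := by rw [hc1, he]; exact xperp_sub_single' u s
  have hc2 : c.2 = q.2 - (p.2 + (1/2:ℝ) • bvec B p.1 (s • e))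
      - (1/2:ℝ) • bvec B (p.1 + s • e) (u - s • e) := by
    have hP2 : P.2 = p.2 + (1/2:ℝ) • bvec B p.1 (s • e) := by
      rw [hP]
      show p.2 + 0 + (1 / 2 : ℝ) • bvec B p.1 (Pi.single (0 : Fin (m+1)) s) = _
      rw [add_zero, single_eq_smul', ← he]
    have hq1 : q.1 - P.1 = u - s • e := by rw [hP1, hu]; abel
    show q.2 - P.2 - (1/2:ℝ) • bvec B P.1 (q.1 - P.1) = _
    rw [hq1, hP2, hP1]
  have hE : c.2 - (1/2:ℝ) • bvec B (xperp c.1) (xpar c.1) = v + s • w := by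
    rw [hc2, hperp, xpar_eq', hc10, ← he, hv, hw]
    exact key_identity B hB e p.1 u (xperp u) q.2 p.2 s (u 0)
  -- inequalities
  have hA0 : 0 ≤ A := eunorm_nonneg' _
  have hV0 : 0 ≤ V := eunorm_nonneg' _
  have hW0 : 0 ≤ W := eunorm_nonneg' _
  have hAT : A < α * T := by
    rw [div_lt_iff₀ hα] at h1; linarith
  have hsabs : |s| ≤ |X| + T := by
    calc |s| = |X - T| := by rw [hs]
      _ ≤ |X| + |T| := abs_sub _ _
      _ = |X| + T := by rw [abs_of_pos hT0]
  have hN : eunorm (v + s • w) ≤ V + |s| * W :=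
    (eunorm_add_le' _ _).trans (by rw [eunorm_smul'])
  have hN0 : 0 ≤ eunorm (v + s • w) := eunorm_nonneg' _
  have hN2 : ε₂^2 * eunorm (v + s • w) ≤ T * K := by
    have step1 : eunorm (v + s • w) ≤ V + (|X| + T) * W := by
      have := mul_le_mul_of_nonneg_right hsabs hW0
      linarith
    have step2 : V + (|X| + T) * W ≤ T * (V + |X| * W + W) := by
      nlinarith [mul_nonneg (sub_nonneg.2 hT1.le) hV0,
        mul_nonneg (mul_nonneg (sub_nonneg.2 hT1.le) (abs_nonneg X)) hW0]
    calc ε₂^2 * eunorm (v + s • w) ≤ ε₂^2 * (T * (V + |X| * W + W)) :=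
          mul_le_mul_of_nonneg_left (step1.trans step2) (sq_nonneg ε₂)
      _ = T * K := by rw [hK]; ring
  have hK' : K < α^2 * T := by
    rw [div_lt_iff₀ (pow_pos hα 2)] at h3; linarith
  have hsqrt : ε₂ * Real.sqrt (eunorm (v + s • w)) < α * T := by
    have h4 : ε₂ * Real.sqrt (eunorm (v + s • w))
        = Real.sqrt (ε₂^2 * eunorm (v + s • w)) := by
      rw [Real.sqrt_mul (sq_nonneg ε₂), Real.sqrt_sq hε₂.le]
    have h5 : ε₂^2 * eunorm (v + s • w) < (α*T)^2 := by
      have h6 : T * K < T * (α^2 * T) := mul_lt_mul_of_pos_left hK' hT0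
      nlinarith [h6, hN2]
    rw [h4]
    calc Real.sqrt (ε₂^2 * eunorm (v + s • w)) < Real.sqrt ((α*T)^2) :=
          Real.sqrt_lt_sqrt (by positivity) h5
      _ = α * T := Real.sqrt_sq (by positivity)
  refine ⟨s, by linarith, c, ?_, ?_⟩
  · simp only [posCone, Set.mem_setOf_eq]
    constructor
    · rw [hE, hperp, show c.1 0 = T from hc10T, abs_of_pos hT0]
      exact max_lt hAT hsqrt
    · rw [show c.1 0 = T from hc10T]; exact hT0
  · show gmul B P c = q
    rw [Prod.ext_iff]
    constructor
    · show P.1 + (q.1 - P.1) = q.1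
      abel
    · show P.2 + (q.2 - P.2 - (1/2:ℝ) • bvec B P.1 (q.1 - P.1))
          + (1/2:ℝ) • bvec B P.1 (q.1 - P.1) = q.2
      abel
end
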